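/- Let A and B be d×d positive semidefinite Hermitian matrices such that rank(A − B) ≤ r. Then ‖√A − √B‖_tr ≤ √(r·‖A − B‖_tr); in particular |Tr√A − Tr√B| ≤ √(r·‖A − B‖_tr). -/

import Mathlib

open scoped ComplexOrder Matrix BigOperators Kronecker
open MeasureTheory

noncomputable section

/-- The old Mathlib definition (Dec 2024) of the square root of a positive semidefinite matrix,
removed from current Mathlib; restored verbatim in meaning. -/
def Matrix.PosSemidef.sqrt {n 𝕜 : Type*} [Fintype n] [RCLike 𝕜] [DecidableEq n]
    {A : Matrix n n 𝕜} (hA : A.PosSemidef) : Matrix n n 𝕜 :=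
  (hA.1.eigenvectorUnitary : Matrix n n 𝕜) *
    Matrix.diagonal ((↑) ∘ (Real.sqrt ·) ∘ hA.1.eigenvalues) *
    (star hA.1.eigenvectorUnitary : Matrix n n 𝕜)

/-- Trace norm of a complex square matrix: `Tr √(XᴴX)`. -/
def traceNorm {ι : Type*} [Fintype ι] [DecidableEq ι] (X : Matrix ι ι ℂ) : ℝ :=
  ((Matrix.posSemidef_conjTranspose_mul_self X).sqrt.trace).re

/-- Frobenius norm `√(Tr(XᴴX))`. -/
def frobNorm {ι : Type*} [Fintype ι] [DecidableEq ι] (X : Matrix ι ι ℂ) : ℝ :=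
  Real.sqrt ((Xᴴ * X).trace).re

/-- Operator norm (largest singular value), realized as the norm of the induced
continuous linear map on Euclidean space. -/
def opNorm {ι : Type*} [Fintype ι] [DecidableEq ι] (X : Matrix ι ι ℂ) : ℝ :=
  ‖Matrix.toEuclideanCLM (𝕜 := ℂ) X‖

/-- Euclidean norm on `ℝ^m`. -/
def l2norm {m : ℕ} (z : Fin m → ℝ) : ℝ :=
  Real.sqrt (∑ i, (z i) ^ 2)

open Classical in
/-- The positive part `[H]₊` of a Hermitian matrix (junk value `0` otherwise). -/
def matPosPart {ι : Type*} [Fintype ι] [DecidableEq ι] (H : Matrix ι ι ℂ) :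
    Matrix ι ι ℂ :=
  if h : H.IsHermitian then
    (h.eigenvectorUnitary : Matrix ι ι ℂ) *
      Matrix.diagonal (fun i => ((max (h.eigenvalues i) 0 : ℝ) : ℂ)) *
      (star h.eigenvectorUnitary : Matrix ι ι ℂ)
  else 0

open Classical in
/-- The positive semidefinite square root of a positive semidefinite matrix
(junk value `0` otherwise). -/
def psdSqrt {ι : Type*} [Fintype ι] [DecidableEq ι] (A : Matrix ι ι ℂ) :
    Matrix ι ι ℂ :=
  if h : A.PosSemidef then h.sqrt else 0

section SqrtPort

open scoped MatrixOrder

lemma Matrix.PosSemidef.sqrt_eq_cfcSqrt {n : Type*} [Fintype n] [DecidableEq n]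
    {A : Matrix n n ℂ} (hA : A.PosSemidef) : hA.sqrt = CFC.sqrt A := by
  rw [CFC.sqrt_eq_real_sqrt A hA.nonneg, cfcₙ_eq_cfc, hA.1.cfc_eq]
  simp only [Matrix.IsHermitian.cfc, Unitary.conjStarAlgAut_apply]
  rfl

lemma Matrix.PosSemidef.posSemidef_sqrt {n : Type*} [Fintype n] [DecidableEq n]
    {A : Matrix n n ℂ} (hA : A.PosSemidef) : hA.sqrt.PosSemidef := by
  rw [hA.sqrt_eq_cfcSqrt]
  exact Matrix.nonneg_iff_posSemidef.mp (CFC.sqrt_nonneg A)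

lemma Matrix.PosSemidef.sqrt_mul_self {n : Type*} [Fintype n] [DecidableEq n]
    {A : Matrix n n ℂ} (hA : A.PosSemidef) : hA.sqrt * hA.sqrt = A := by
  rw [hA.sqrt_eq_cfcSqrt]
  exact CFC.sqrt_mul_sqrt_self A hA.nonneg

lemma Matrix.PosSemidef.sq_sqrt {n : Type*} [Fintype n] [DecidableEq n]
    {A : Matrix n n ℂ} (hA : A.PosSemidef) : hA.sqrt ^ 2 = A := by
  rw [sq, hA.sqrt_mul_self]

lemma Matrix.PosSemidef.eq_sqrt_of_sq_eq {n : Type*} [Fintype n] [DecidableEq n]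
    {A B : Matrix n n ℂ} (hA : A.PosSemidef) (hB : B.PosSemidef) (hAB : A ^ 2 = B) :
    A = hB.sqrt := by
  rw [hB.sqrt_eq_cfcSqrt]
  exact (CFC.sqrt_unique (by rw [← sq, hAB]) hA.nonneg).symm

end SqrtPort

namespace SqrtPerturb

variable {ι : Type*} [Fintype ι] [DecidableEq ι]

/-- Functional calculus for a Hermitian matrix via its spectral decomposition. -/
def mcfc {M : Matrix ι ι ℂ} (hM : M.IsHermitian) (f : ℝ → ℝ) : Matrix ι ι ℂ :=
  (hM.eigenvectorUnitary : Matrix ι ι ℂ) *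
    Matrix.diagonal (fun i => ((f (hM.eigenvalues i) : ℝ) : ℂ)) *
    (star hM.eigenvectorUnitary : Matrix ι ι ℂ)

variable {M : Matrix ι ι ℂ} (hM : M.IsHermitian)

lemma mcfc_congr {f g : ℝ → ℝ} (h : ∀ i, f (hM.eigenvalues i) = g (hM.eigenvalues i)) :
    mcfc hM f = mcfc hM g := by
  have : (fun i => ((f (hM.eigenvalues i) : ℝ) : ℂ)) =
      (fun i => ((g (hM.eigenvalues i) : ℝ) : ℂ)) := funext fun i => by rw [h i]
  unfold mcfc
  rw [this]

lemma mcfc_mul (f g : ℝ → ℝ) :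
    mcfc hM f * mcfc hM g = mcfc hM (fun x => f x * g x) := by
  unfold mcfc
  have h1 : (star hM.eigenvectorUnitary : Matrix ι ι ℂ) *
      (hM.eigenvectorUnitary : Matrix ι ι ℂ) = 1 := Unitary.coe_star_mul_self _
  calc (hM.eigenvectorUnitary : Matrix ι ι ℂ) *
        Matrix.diagonal (fun i => ((f (hM.eigenvalues i) : ℝ) : ℂ)) *
        (star hM.eigenvectorUnitary : Matrix ι ι ℂ) *
        ((hM.eigenvectorUnitary : Matrix ι ι ℂ) *
        Matrix.diagonal (fun i => ((g (hM.eigenvalues i) : ℝ) : ℂ)) *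
        (star hM.eigenvectorUnitary : Matrix ι ι ℂ))
      = (hM.eigenvectorUnitary : Matrix ι ι ℂ) *
        (Matrix.diagonal (fun i => ((f (hM.eigenvalues i) : ℝ) : ℂ)) *
         Matrix.diagonal (fun i => ((g (hM.eigenvalues i) : ℝ) : ℂ))) *
        (star hM.eigenvectorUnitary : Matrix ι ι ℂ) := by
        rw [Matrix.mul_assoc, Matrix.mul_assoc, Matrix.mul_assoc, ← Matrix.mul_assoc _ _ (Matrix.diagonal _ * _), h1, Matrix.one_mul, Matrix.mul_assoc, Matrix.mul_assoc]
    _ = _ := by rw [Matrix.diagonal_mul_diagonal]; push_cast; rfl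

lemma mcfc_add (f g : ℝ → ℝ) :
    mcfc hM f + mcfc hM g = mcfc hM (fun x => f x + g x) := by
  unfold mcfc
  rw [← Matrix.add_mul, ← Matrix.mul_add, Matrix.diagonal_add]
  push_cast
  rfl

lemma mcfc_zero : mcfc hM (fun _ => 0) = 0 := by
  unfold mcfc
  simp

lemma mcfc_neg (f : ℝ → ℝ) : - mcfc hM f = mcfc hM (fun x => - f x) := by
  have h := mcfc_add hM f (fun x => - f x)
  simp only [add_neg_cancel] at h
  rw [mcfc_zero] at h
  exact neg_eq_of_add_eq_zero_right h

lemma mcfc_sub (f g : ℝ → ℝ) :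
    mcfc hM f - mcfc hM g = mcfc hM (fun x => f x - g x) := by
  rw [sub_eq_add_neg, mcfc_neg, mcfc_add]
  simp_rw [← sub_eq_add_neg]

lemma mcfc_one : mcfc hM (fun _ => 1) = 1 := by
  unfold mcfc
  simp [Matrix.diagonal_one, Unitary.coe_mul_star_self]

lemma mcfc_id : mcfc hM (fun x => x) = M := by
  unfold mcfc
  exact (hM.spectral_theorem).symm

lemma mcfc_isHermitian (f : ℝ → ℝ) : (mcfc hM f).IsHermitian := by
  have hd : (Matrix.diagonal fun i => ((f (hM.eigenvalues i) : ℝ) : ℂ)).IsHermitian := by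
    refine Matrix.isHermitian_diagonal_of_self_adjoint _ ?_
    ext i
    exact Complex.conj_ofReal _
  unfold mcfc
  rw [Matrix.star_eq_conjTranspose]
  exact Matrix.isHermitian_mul_mul_conjTranspose _ hd

lemma mcfc_posSemidef {f : ℝ → ℝ} (h : ∀ i, 0 ≤ f (hM.eigenvalues i)) :
    (mcfc hM f).PosSemidef := by
  unfold mcfc
  have hd : (Matrix.diagonal (fun i => ((f (hM.eigenvalues i) : ℝ) : ℂ))).PosSemidef := by
    refine Matrix.posSemidef_diagonal_iff.mpr fun i => ?_
    exact Complex.zero_le_real.mpr (h i)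
  rw [Matrix.star_eq_conjTranspose]
  exact hd.mul_mul_conjTranspose_same _

lemma mcfc_trace (f : ℝ → ℝ) :
    (mcfc hM f).trace = ∑ i, ((f (hM.eigenvalues i) : ℝ) : ℂ) := by
  unfold mcfc
  rw [Matrix.trace_mul_cycle, Unitary.coe_star_mul_self, Matrix.one_mul,
    Matrix.trace_diagonal]

lemma mcfc_trace_re (f : ℝ → ℝ) :
    ((mcfc hM f).trace).re = ∑ i, f (hM.eigenvalues i) := by
  rw [mcfc_trace]
  rw [Complex.re_sum]
  simp


lemma sqrt_eq_mcfc {f : ℝ → ℝ} (hf : ∀ i, 0 ≤ f (hM.eigenvalues i)) {N : Matrix ι ι ℂ}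
    (hN : N.PosSemidef) (hfN : mcfc hM f = N) :
    hN.sqrt = mcfc hM (fun x => Real.sqrt (f x)) := by
  have hpsd : (mcfc hM fun x => Real.sqrt (f x)).PosSemidef :=
    mcfc_posSemidef hM fun i => Real.sqrt_nonneg _
  refine (hpsd.eq_sqrt_of_sq_eq hN ?_).symm
  rw [pow_two, mcfc_mul, ← hfN]
  exact mcfc_congr hM (fun i => Real.mul_self_sqrt (hf i))

lemma trace_re_eq_sum_eigenvalues : M.trace.re = ∑ i, hM.eigenvalues i := by
  conv_lhs => rw [← mcfc_id hM]
  exact mcfc_trace_re hM _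

lemma trace_re_nonneg {M : Matrix ι ι ℂ} (h : M.PosSemidef) : 0 ≤ M.trace.re := by
  rw [trace_re_eq_sum_eigenvalues h.1]
  exact Finset.sum_nonneg fun i _ => h.eigenvalues_nonneg i

lemma trace_mul_re_nonneg {X Y : Matrix ι ι ℂ} (hX : X.PosSemidef) (hY : Y.PosSemidef) :
    0 ≤ ((X * Y).trace).re := by
  have hS := hX.posSemidef_sqrt
  have h1 : X * Y = hX.sqrt * (hX.sqrt * Y) := by
    rw [← Matrix.mul_assoc, hX.sqrt_mul_self]
  have h2 : ((X * Y).trace) = ((hX.sqrt * Y * hX.sqrt).trace) := by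
    rw [h1, Matrix.trace_mul_comm, Matrix.mul_assoc]
  rw [h2]
  apply trace_re_nonneg
  have := hY.mul_mul_conjTranspose_same hX.sqrt
  rwa [hS.1.eq] at this

lemma trace_re_sub {X Y : Matrix ι ι ℂ} : ((X - Y).trace).re = X.trace.re - Y.trace.re := by
  rw [Matrix.trace_sub, Complex.sub_re]

lemma trace_re_add {X Y : Matrix ι ι ℂ} : ((X + Y).trace).re = X.trace.re + Y.trace.re := by
  rw [Matrix.trace_add, Complex.add_re]

lemma posDef_of_isUnit_det {M : Matrix ι ι ℂ} (h : M.PosSemidef) (hdet : IsUnit M.det) :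
    M.PosDef := by
  refine Matrix.PosDef.of_dotProduct_mulVec_pos h.1 fun x hx => ?_
  rcases (h.dotProduct_mulVec_nonneg x).lt_or_eq with hlt | heq
  · exact hlt
  · exfalso
    have h0 : M *ᵥ x = 0 := (h.dotProduct_mulVec_zero_iff x).mp heq.symm
    have : x = M⁻¹ *ᵥ (M *ᵥ x) := by
      rw [Matrix.mulVec_mulVec, Matrix.nonsing_inv_mul M hdet, Matrix.one_mulVec]
    rw [h0, Matrix.mulVec_zero] at this
    exact hx this

lemma sqrt_posDef {M : Matrix ι ι ℂ} (hM : M.PosDef) : (hM.posSemidef.sqrt).PosDef := by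
  apply posDef_of_isUnit_det hM.posSemidef.posSemidef_sqrt
  have hdet : hM.posSemidef.sqrt.det * hM.posSemidef.sqrt.det = M.det := by
    rw [← Matrix.det_mul, hM.posSemidef.sqrt_mul_self]
  have hMdet : M.det ≠ 0 := ne_of_gt hM.det_pos
  rw [isUnit_iff_ne_zero]
  intro h0
  rw [h0, mul_zero] at hdet
  exact hMdet hdet.symm

lemma mcfc_det (f : ℝ → ℝ) : (mcfc hM f).det = ∏ i, ((f (hM.eigenvalues i) : ℝ) : ℂ) := by
  unfold mcfc
  rw [Matrix.det_mul, Matrix.det_mul, Matrix.det_diagonal]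
  have : ((hM.eigenvectorUnitary : Matrix ι ι ℂ)).det *
      ((star hM.eigenvectorUnitary : Matrix ι ι ℂ)).det = 1 := by
    rw [← Matrix.det_mul, (Matrix.mem_unitaryGroup_iff).mp (hM.eigenvectorUnitary).2,
      Matrix.det_one]
  calc (hM.eigenvectorUnitary : Matrix ι ι ℂ).det *
        (∏ i, ((f (hM.eigenvalues i) : ℝ) : ℂ)) *
        (star hM.eigenvectorUnitary : Matrix ι ι ℂ).det
      = ((hM.eigenvectorUnitary : Matrix ι ι ℂ)).det *
        ((star hM.eigenvectorUnitary : Matrix ι ι ℂ)).det *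
        (∏ i, ((f (hM.eigenvalues i) : ℝ) : ℂ)) := by ring
    _ = _ := by rw [this, one_mul]

lemma mcfc_posDef {f : ℝ → ℝ} (h : ∀ i, 0 < f (hM.eigenvalues i)) :
    (mcfc hM f).PosDef := by
  apply posDef_of_isUnit_det (mcfc_posSemidef hM (fun i => (h i).le))
  rw [mcfc_det, isUnit_iff_ne_zero]
  apply Finset.prod_ne_zero_iff.mpr
  intro i _
  exact_mod_cast ne_of_gt (h i)

lemma psd_conj_herm {N R : Matrix ι ι ℂ} (hN : N.PosSemidef) (hR : R.IsHermitian) :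
    (R * N * R).PosSemidef := by
  have := hN.mul_mul_conjTranspose_same R
  rwa [hR.eq] at this

lemma dotProduct_self_eigenvectorBasis (hM : M.IsHermitian) (i : ι) :
    dotProduct (star ⇑(hM.eigenvectorBasis i)) ⇑(hM.eigenvectorBasis i) = 1 := by
  have ho := hM.eigenvectorBasis.orthonormal
  rw [orthonormal_iff_ite] at ho
  have h := ho i i
  simp only [if_pos rfl] at h
  rw [EuclideanSpace.inner_eq_star_dotProduct, dotProduct_comm] at h
  simpa using h

lemma one_le_eigenvalues_of_psd_sub_one (hM : M.IsHermitian)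
    (h : (M - 1).PosSemidef) (i : ι) : 1 ≤ hM.eigenvalues i := by
  set v : ι → ℂ := ⇑(hM.eigenvectorBasis i) with hvdef
  have h0 := h.re_dotProduct_nonneg v
  rw [Matrix.sub_mulVec, Matrix.one_mulVec, dotProduct_sub,
    dotProduct_self_eigenvectorBasis hM i] at h0
  rw [map_sub] at h0
  have he := hM.eigenvalues_eq i
  simp only [RCLike.one_re] at h0
  rw [← he] at h0
  linarith

lemma psd_one_sub_inv {M : Matrix ι ι ℂ} (hM : M.PosDef) (h1 : (M - 1).PosSemidef) :
    ((1 : Matrix ι ι ℂ) - M⁻¹).PosSemidef := by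
  have herm : M.IsHermitian := hM.isHermitian
  have hev : ∀ i, 0 < herm.eigenvalues i := fun i => hM.eigenvalues_pos i
  have hinv : M⁻¹ = mcfc herm (fun x => x⁻¹) := by
    have hmul : mcfc herm (fun x => x⁻¹) * mcfc herm (fun x => x) = 1 := by
      rw [mcfc_mul, mcfc_congr herm (g := fun _ => 1)
        (fun i => inv_mul_cancel₀ (ne_of_gt (hev i))), mcfc_one]
    rw [mcfc_id herm] at hmul
    exact Matrix.inv_eq_left_inv hmul
  have h1' : ∀ i, 1 ≤ herm.eigenvalues i :=
    fun i => one_le_eigenvalues_of_psd_sub_one herm h1 i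
  rw [hinv, ← mcfc_one herm, mcfc_sub]
  apply mcfc_posSemidef
  intro i
  have hx := h1' i
  have hp : (0:ℝ) < herm.eigenvalues i := hev i
  have : (herm.eigenvalues i)⁻¹ ≤ 1 := by
    rw [inv_le_one_iff₀]
    right; exact hx
  simpa using this

lemma inv_antitone {P Q : Matrix ι ι ℂ} (hP : P.PosDef) (hQ : Q.PosDef)
    (h : (Q - P).PosSemidef) : (P⁻¹ - Q⁻¹).PosSemidef := by
  set R := hP.posSemidef.sqrt with hRdef
  have hRpd : R.PosDef := sqrt_posDef hP
  have hRH : R.IsHermitian := hRpd.isHermitian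
  have hRdet : IsUnit R.det := (Matrix.isUnit_iff_isUnit_det R).mp hRpd.isUnit
  have hRR : R * R = P := hP.posSemidef.sqrt_mul_self
  have hRiH : (R⁻¹).IsHermitian := by
    rw [Matrix.IsHermitian, Matrix.conjTranspose_nonsing_inv, hRH.eq]
  have hRinv_mul : R⁻¹ * R = 1 := Matrix.nonsing_inv_mul R hRdet
  have hmul_Rinv : R * R⁻¹ = 1 := Matrix.mul_nonsing_inv R hRdet
  set M' := R⁻¹ * Q * R⁻¹ with hM'def
  have hM'psd : M'.PosSemidef := psd_conj_herm hQ.posSemidef hRiH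
  have hM'pd : M'.PosDef := by
    apply posDef_of_isUnit_det hM'psd
    rw [hM'def, Matrix.det_mul, Matrix.det_mul]
    have hRidet : IsUnit (R⁻¹).det := Matrix.isUnit_nonsing_inv_det _ hRdet
    have hQdet : IsUnit Q.det := (Matrix.isUnit_iff_isUnit_det Q).mp hQ.isUnit
    exact (hRidet.mul hQdet).mul hRidet
  have hP1 : R⁻¹ * P * R⁻¹ = 1 := by
    rw [← hRR]
    calc R⁻¹ * (R * R) * R⁻¹ = R⁻¹ * R * (R * R⁻¹) := by simp only [mul_assoc]
    _ = 1 := by rw [hRinv_mul, hmul_Rinv, Matrix.one_mul]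
  have hsub : R⁻¹ * (Q - P) * R⁻¹ = M' - 1 := by
    rw [Matrix.mul_sub, Matrix.sub_mul, hP1]
  have hM'1 : (M' - 1).PosSemidef := hsub ▸ psd_conj_herm h hRiH
  have hinvpsd : ((1 : Matrix ι ι ℂ) - M'⁻¹).PosSemidef := psd_one_sub_inv hM'pd hM'1
  have hM'inv : M'⁻¹ = R * Q⁻¹ * R := by
    rw [hM'def, Matrix.mul_inv_rev, Matrix.mul_inv_rev,
      Matrix.nonsing_inv_nonsing_inv R hRdet]
    simp only [mul_assoc]
  have hfinal : R⁻¹ * ((1 : Matrix ι ι ℂ) - M'⁻¹) * R⁻¹ = P⁻¹ - Q⁻¹ := by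
    rw [Matrix.mul_sub, Matrix.sub_mul, Matrix.mul_one, hM'inv]
    refine congrArg₂ (· - ·) ?_ ?_
    · rw [← hRR, Matrix.mul_inv_rev]
    · calc R⁻¹ * (R * Q⁻¹ * R) * R⁻¹
          = R⁻¹ * R * Q⁻¹ * (R * R⁻¹) := by simp only [mul_assoc]
        _ = Q⁻¹ := by rw [hRinv_mul, hmul_Rinv, Matrix.one_mul, Matrix.mul_one]
  exact hfinal ▸ psd_conj_herm hinvpsd hRiH

lemma sqrt_mono {X Y : Matrix ι ι ℂ} (hX : X.PosSemidef) (hY : Y.PosSemidef)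
    (h : (Y - X).PosSemidef) : (hY.sqrt - hX.sqrt).PosSemidef := by
  set S := hX.sqrt with hSdef
  set T := hY.sqrt with hTdef
  have hS := hX.posSemidef_sqrt
  have hT := hY.posSemidef_sqrt
  have hD : (T - S).IsHermitian := hT.1.sub hS.1
  apply hD.posSemidef_iff_eigenvalues_nonneg.mpr
  intro i
  rw [Pi.zero_apply]
  by_contra hneg
  push_neg at hneg
  set μ := hD.eigenvalues i with hμdef
  set v : ι → ℂ := ⇑(hD.eigenvectorBasis i) with hvdef
  have hv : (T - S) *ᵥ v = (μ : ℂ) • v := by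
    have h' := hD.mulVec_eigenvectorBasis i
    rw [hvdef, h']
    funext j
    simp [Complex.real_smul, hμdef]
  have hvne : v ≠ 0 := by
    intro h0
    have h1 := dotProduct_self_eigenvectorBasis hD i
    rw [← hvdef, h0] at h1
    simp at h1
  have hkey : Y - X = T * (T - S) + (T - S) * S := by
    have hTT : T * T = Y := hY.sqrt_mul_self
    have hSS : S * S = X := hX.sqrt_mul_self
    rw [Matrix.mul_sub, Matrix.sub_mul, hTT, hSS]
    abel
  have hq := h.dotProduct_mulVec_nonneg v
  rw [hkey, Matrix.add_mulVec, dotProduct_add] at hq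
  have h1 : dotProduct (star v) ((T * (T - S)) *ᵥ v)
      = (μ:ℂ) * dotProduct (star v) (T *ᵥ v) := by
    rw [← Matrix.mulVec_mulVec, hv, Matrix.mulVec_smul, dotProduct_smul, smul_eq_mul]
  have h2 : dotProduct (star v) (((T - S) * S) *ᵥ v)
      = (μ:ℂ) * dotProduct (star v) (S *ᵥ v) := by
    rw [← Matrix.mulVec_mulVec, Matrix.dotProduct_mulVec]
    have hrow : star v ᵥ* (T - S) = (μ:ℂ) • star v := by
      have h3 : star ((T - S) *ᵥ v) = star v ᵥ* (T - S)ᴴ := Matrix.star_mulVec _ _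
      rw [hD.eq] at h3
      rw [← h3, hv, star_smul]
      simp [Complex.conj_ofReal]
    rw [hrow, smul_dotProduct, smul_eq_mul]
  rw [h1, h2, ← mul_add] at hq
  set t := dotProduct (star v) (T *ᵥ v) + dotProduct (star v) (S *ᵥ v) with htdef
  have ht1 := hT.dotProduct_mulVec_nonneg v
  have ht2 := hS.dotProduct_mulVec_nonneg v
  have ht : 0 ≤ t := add_nonneg ht1 ht2
  have htzero : t = 0 := by
    rw [Complex.le_def] at hq ht
    apply Complex.ext
    · have hre : 0 ≤ ((μ:ℂ) * t).re := by simpa using hq.1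
      have him : t.im = 0 := ht.2.symm
      rw [Complex.mul_re, Complex.ofReal_re, Complex.ofReal_im, him] at hre
      simp only [zero_mul, sub_zero] at hre
      have hge : 0 ≤ t.re := by simpa using ht.1
      have hle : t.re ≤ 0 := by
        by_contra h'
        push_neg at h'
        exact absurd hre (not_le.mpr (mul_neg_of_neg_of_pos hneg h'))
      simp only [Complex.zero_re]
      linarith
    · simpa using ht.2.symm
  have e1 : dotProduct (star v) (T *ᵥ v) = - dotProduct (star v) (S *ᵥ v) := by
    rw [htdef] at htzero
    exact eq_neg_of_add_eq_zero_left htzero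
  have eT : dotProduct (star v) (T *ᵥ v) = 0 :=
    le_antisymm (e1 ▸ neg_nonpos.mpr ht2) ht1
  have eS : dotProduct (star v) (S *ᵥ v) = 0 := by
    rw [eT] at e1
    simpa using e1.symm
  have hTv : T *ᵥ v = 0 := (hT.dotProduct_mulVec_zero_iff v).mp eT
  have hSv : S *ᵥ v = 0 := (hS.dotProduct_mulVec_zero_iff v).mp eS
  have hzero : (T - S) *ᵥ v = 0 := by
    rw [Matrix.sub_mulVec, hTv, hSv, sub_zero]
  rw [hv] at hzero
  rcases smul_eq_zero.mp hzero with hc | hc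
  · have : μ = 0 := by exact_mod_cast hc
    linarith
  · exact hvne hc

lemma mcfc_const (c : ℝ) : mcfc hM (fun _ => c) = (c : ℂ) • 1 := by
  unfold mcfc
  have hd : Matrix.diagonal (fun _ : ι => ((c : ℝ) : ℂ)) = (c : ℂ) • (1 : Matrix ι ι ℂ) := by
    ext i j
    by_cases h : i = j <;> simp [Matrix.diagonal_apply, h]
  rw [hd, Matrix.mul_smul, Matrix.smul_mul, Matrix.mul_one,
    (Matrix.mem_unitaryGroup_iff).mp (hM.eigenvectorUnitary).2]

lemma herm_add_smul_one (ε : ℝ) :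
    M + (ε : ℂ) • 1 = mcfc hM (fun x => x + ε) := by
  rw [← mcfc_add hM, mcfc_id, mcfc_const]

lemma sqrt_eq_mcfc_id {X : Matrix ι ι ℂ} (hX : X.PosSemidef) :
    hX.sqrt = mcfc hX.1 (fun x => Real.sqrt x) :=
  sqrt_eq_mcfc hX.1 (fun i => hX.eigenvalues_nonneg i) hX (mcfc_id hX.1)

lemma trace_re_sqrt {X : Matrix ι ι ℂ} (hX : X.PosSemidef) :
    (hX.sqrt.trace).re = ∑ i, Real.sqrt (hX.1.eigenvalues i) := by
  rw [sqrt_eq_mcfc_id, mcfc_trace_re]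

lemma shift_posSemidef {X : Matrix ι ι ℂ} (hX : X.PosSemidef) {ε : ℝ} (hε : 0 ≤ ε) :
    (X + (ε : ℂ) • 1).PosSemidef := by
  rw [herm_add_smul_one hX.1]
  exact mcfc_posSemidef _ fun i => add_nonneg (hX.eigenvalues_nonneg i) hε

lemma shift_posDef {X : Matrix ι ι ℂ} (hX : X.PosSemidef) {ε : ℝ} (hε : 0 < ε) :
    (X + (ε : ℂ) • 1).PosDef := by
  rw [herm_add_smul_one hX.1]
  exact mcfc_posDef _ fun i => add_pos_of_nonneg_of_pos (hX.eigenvalues_nonneg i) hε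

lemma trace_re_sqrt_shift {X : Matrix ι ι ℂ} (hX : X.PosSemidef) {ε : ℝ} (hε : 0 ≤ ε)
    (hXe : (X + (ε : ℂ) • 1).PosSemidef) :
    (hXe.sqrt.trace).re = ∑ i, Real.sqrt (hX.1.eigenvalues i + ε) := by
  rw [sqrt_eq_mcfc hX.1 (f := fun x => x + ε)
    (fun i => add_nonneg (hX.eigenvalues_nonneg i) hε) hXe
    (herm_add_smul_one hX.1 ε).symm, mcfc_trace_re]

/-- trace AM-GM: `2 Tr √W ≤ Tr (S W S) + Tr (S⁻¹ S⁻¹)` for `S` positive definite. -/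
lemma trace_amgm {W S : Matrix ι ι ℂ} (hW : W.PosSemidef) (hS : S.PosDef) :
    2 * (hW.sqrt.trace).re ≤ ((S * W * S).trace).re + ((S⁻¹ * S⁻¹).trace).re := by
  set G := hW.sqrt with hGdef
  have hG := hW.posSemidef_sqrt
  have hSdet : IsUnit S.det := (Matrix.isUnit_iff_isUnit_det S).mp hS.isUnit
  have hSiH : (S⁻¹).IsHermitian := by
    rw [Matrix.IsHermitian, Matrix.conjTranspose_nonsing_inv, hS.isHermitian.eq]
  set X := G * S - S⁻¹ with hXdef
  have h0 : 0 ≤ ((Xᴴ * X).trace).re :=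
    trace_re_nonneg (Matrix.posSemidef_conjTranspose_mul_self X)
  have hXH : Xᴴ = S * G - S⁻¹ := by
    rw [hXdef, Matrix.conjTranspose_sub, Matrix.conjTranspose_mul, hG.1.eq,
      hS.isHermitian.eq, hSiH.eq]
  have hexp : Xᴴ * X = S * (G * G) * S + S⁻¹ * S⁻¹ - S * G * S⁻¹ - S⁻¹ * (G * S) := by
    rw [hXH, hXdef]
    noncomm_ring
  have hGG : G * G = W := hW.sqrt_mul_self
  have ht1 : (S * G * S⁻¹).trace = G.trace := by
    rw [Matrix.trace_mul_cycle, Matrix.nonsing_inv_mul S hSdet, Matrix.one_mul]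
  have ht2 : (S⁻¹ * (G * S)).trace = G.trace := by
    rw [Matrix.trace_mul_comm, Matrix.mul_assoc, Matrix.mul_nonsing_inv S hSdet,
      Matrix.mul_one]
  rw [hexp, hGG] at h0
  rw [Matrix.trace_sub, Matrix.trace_sub, Matrix.trace_add, ht1, ht2] at h0
  simp only [Complex.sub_re, Complex.add_re] at h0
  linarith

/-- Trace subadditivity of the matrix square root. -/
lemma trace_sqrt_subadd {X Y : Matrix ι ι ℂ} (hX : X.PosSemidef) (hY : Y.PosSemidef)
    (hXY : (X + Y).PosSemidef) :
    (hXY.sqrt.trace).re ≤ (hX.sqrt.trace).re + (hY.sqrt.trace).re := by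
  have key : ∀ ε : ℝ, 0 < ε → (hXY.sqrt.trace).re ≤
      (∑ i, Real.sqrt (hX.1.eigenvalues i + ε)) +
      (∑ i, Real.sqrt (hY.1.eigenvalues i + ε)) := by
    intro ε hε
    set Xe := X + (ε : ℂ) • 1 with hXedef
    set Ye := Y + (ε : ℂ) • 1 with hYedef
    have hXe : Xe.PosSemidef := shift_posSemidef hX hε.le
    have hYe : Ye.PosSemidef := shift_posSemidef hY hε.le
    have hXepd : Xe.PosDef := shift_posDef hX hε
    have hYepd : Ye.PosDef := shift_posDef hY hε
    set Gx := hXe.sqrt with hGxdef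
    set Gy := hYe.sqrt with hGydef
    have hGx := hXe.posSemidef_sqrt
    have hGy := hYe.posSemidef_sqrt
    have hGxpd : Gx.PosDef := sqrt_posDef hXepd
    have hGypd : Gy.PosDef := sqrt_posDef hYepd
    set T := Gx + Gy with hTdef
    have hTpd : T.PosDef := hGxpd.add hGypd
    have hTdet : IsUnit T.det := (Matrix.isUnit_iff_isUnit_det T).mp hTpd.isUnit
    have hTinv : (T⁻¹).PosDef := hTpd.inv
    set S := hTinv.posSemidef.sqrt with hSdef
    have hSpd : S.PosDef := sqrt_posDef hTinv
    have hSS : S * S = T⁻¹ := hTinv.posSemidef.sqrt_mul_self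
    have hSinv : S⁻¹ * S⁻¹ = T := by
      rw [← Matrix.mul_inv_rev, hSS, Matrix.nonsing_inv_nonsing_inv T hTdet]
    -- the middle bound Tr (S Ze S) ≤ Tr Gz for Ze ∈ {Xe, Ye}
    have middle : ∀ (Z : Matrix ι ι ℂ) (hZ : Z.PosSemidef) (G : Matrix ι ι ℂ)
        (hGpd : G.PosDef) (hGG : G * G = Z) (hTG : (T - G).PosSemidef),
        ((S * Z * S).trace).re ≤ (G.trace).re := by
      intro Z hZ G hGpd hGG hTG
      have hGH : G.IsHermitian := hGpd.isHermitian
      have hGdet : IsUnit G.det := (Matrix.isUnit_iff_isUnit_det G).mp hGpd.isUnit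
      have hanti : (G⁻¹ - T⁻¹).PosSemidef := inv_antitone hGpd hTpd hTG
      have htr : (S * Z * S).trace = (G * T⁻¹ * G).trace := by
        rw [← hGG, ← hSS]
        calc (S * (G * G) * S).trace
            = (S * (S * (G * G))).trace := Matrix.trace_mul_comm _ _
          _ = ((S * S) * (G * G)).trace := by simp only [mul_assoc]
          _ = ((G * G) * (S * S)).trace := Matrix.trace_mul_comm _ _
          _ = (G * (G * (S * S))).trace := by simp only [mul_assoc]
          _ = (G * (S * S) * G).trace := (Matrix.trace_mul_comm _ _).symm
      have hdiff : G * (G⁻¹ - T⁻¹) * G = G - G * T⁻¹ * G := by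
        rw [Matrix.mul_sub, Matrix.sub_mul, Matrix.mul_nonsing_inv G hGdet, Matrix.one_mul]
      have hpsd : 0 ≤ ((G - G * T⁻¹ * G).trace).re := by
        rw [← hdiff]
        exact trace_re_nonneg (psd_conj_herm hanti hGH)
      rw [htr]
      rw [trace_re_sub] at hpsd
      linarith
    -- apply AM-GM with W = Xe + Ye
    have hWpsd : (Xe + Ye).PosSemidef := hXe.add hYe
    have hamgm := trace_amgm hWpsd hSpd
    have hsplit : ((S * (Xe + Ye) * S).trace).re
        = ((S * Xe * S).trace).re + ((S * Ye * S).trace).re := by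
      rw [Matrix.mul_add, Matrix.add_mul, Matrix.trace_add, Complex.add_re]
    have hmx := middle Xe hXe Gx hGxpd (hXe.sqrt_mul_self) (by
      rw [hTdef]
      simpa using hGy)
    have hmy := middle Ye hYe Gy hGypd (hYe.sqrt_mul_self) (by
      rw [hTdef]
      simpa using hGx)
    have hTtr : ((S⁻¹ * S⁻¹).trace).re = (Gx.trace).re + (Gy.trace).re := by
      rw [hSinv, hTdef, Matrix.trace_add, Complex.add_re]
    -- combine: Tr √(Xe+Ye) ≤ Tr Gx + Tr Gy
    have hstep : ((hWpsd.sqrt.trace).re) ≤ (Gx.trace).re + (Gy.trace).re := by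
      rw [hsplit, hTtr] at hamgm
      linarith
    -- monotone step : Tr √(X+Y) ≤ Tr √(Xe+Ye)
    have hshift : Xe + Ye = (X + Y) + ((ε + ε : ℝ) : ℂ) • 1 := by
      rw [hXedef, hYedef]
      push_cast
      rw [add_smul]
      abel
    have hWtr : ((hWpsd.sqrt.trace).re) = ∑ i, Real.sqrt (hXY.1.eigenvalues i + (ε + ε)) := by
      have hWpsd' : ((X + Y) + ((ε + ε : ℝ) : ℂ) • 1).PosSemidef := hshift ▸ hWpsd
      have hsqrt_eq : hWpsd.sqrt = hWpsd'.sqrt :=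
        hWpsd.posSemidef_sqrt.eq_sqrt_of_sq_eq hWpsd' (by rw [hWpsd.sq_sqrt, hshift])
      rw [hsqrt_eq]
      exact trace_re_sqrt_shift hXY (by linarith) hWpsd'
    have hmono : ((hXY.sqrt.trace).re) ≤ ((hWpsd.sqrt.trace).re) := by
      rw [hWtr, trace_re_sqrt hXY]
      apply Finset.sum_le_sum
      intro i _
      exact Real.sqrt_le_sqrt (by linarith)
    have hx : (Gx.trace).re = ∑ i, Real.sqrt (hX.1.eigenvalues i + ε) :=
      trace_re_sqrt_shift hX hε.le hXe
    have hy : (Gy.trace).re = ∑ i, Real.sqrt (hY.1.eigenvalues i + ε) :=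
      trace_re_sqrt_shift hY hε.le hYe
    rw [← hx, ← hy]
    linarith
  -- take the limit ε → 0⁺
  have hcont : Filter.Tendsto (fun ε : ℝ =>
      (∑ i, Real.sqrt (hX.1.eigenvalues i + ε)) +
      (∑ i, Real.sqrt (hY.1.eigenvalues i + ε))) (nhdsWithin 0 (Set.Ioi 0))
      (nhds ((∑ i, Real.sqrt (hX.1.eigenvalues i)) +
        (∑ i, Real.sqrt (hY.1.eigenvalues i)))) := by
    have hc : Continuous (fun ε : ℝ =>
        (∑ i, Real.sqrt (hX.1.eigenvalues i + ε)) +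
        (∑ i, Real.sqrt (hY.1.eigenvalues i + ε))) := by
      apply Continuous.add <;>
      · apply continuous_finset_sum
        intro i _
        exact Real.continuous_sqrt.comp (continuous_const.add continuous_id)
    have := hc.tendsto 0
    simp only [add_zero] at this
    exact this.mono_left nhdsWithin_le_nhds
  have hle := ge_of_tendsto hcont (Filter.eventually_of_mem self_mem_nhdsWithin
    (fun ε hε => key ε hε))
  rw [trace_re_sqrt hX, trace_re_sqrt hY]
  exact hle

/-- If `P, 1 - P, N, N - Z` are psd then `Re Tr (P Z) ≤ Re Tr N`. -/
lemma trace_mul_le_of_psd {P N Z : Matrix ι ι ℂ} (hP : P.PosSemidef)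
    (h1P : ((1 : Matrix ι ι ℂ) - P).PosSemidef) (hN : N.PosSemidef)
    (hNZ : (N - Z).PosSemidef) : ((P * Z).trace).re ≤ (N.trace).re := by
  have h1 : 0 ≤ ((P * (N - Z)).trace).re := trace_mul_re_nonneg hP hNZ
  have h2 : 0 ≤ ((((1 : Matrix ι ι ℂ) - P) * N).trace).re := trace_mul_re_nonneg h1P hN
  have e1 : P * (N - Z) = P * N - P * Z := by rw [Matrix.mul_sub]
  have e2 : ((1 : Matrix ι ι ℂ) - P) * N = N - P * N := by
    rw [Matrix.sub_mul, Matrix.one_mul]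
  rw [e1, trace_re_sub] at h1
  rw [e2, trace_re_sub] at h2
  linarith

end SqrtPerturb




open SqrtPerturb in
lemma traceNorm_herm {ι : Type*} [Fintype ι] [DecidableEq ι] {M : Matrix ι ι ℂ}
    (hM : M.IsHermitian) : traceNorm M = ∑ i, |hM.eigenvalues i| := by
  unfold traceNorm
  have hmm : mcfc hM (fun x => |x| * |x|) = mcfc hM (fun x => x) * mcfc hM (fun x => x) := by
    rw [mcfc_mul]
    exact mcfc_congr hM fun i => abs_mul_abs_self _
  have key : (Matrix.posSemidef_conjTranspose_mul_self M).sqrt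
      = mcfc hM (fun x => |x|) := by
    refine ((mcfc_posSemidef hM (fun i => abs_nonneg _)).eq_sqrt_of_sq_eq
      (Matrix.posSemidef_conjTranspose_mul_self M) ?_).symm
    rw [pow_two, mcfc_mul, hmm, mcfc_id hM, hM.eq]
  rw [key, mcfc_trace_re hM]

/-- **Square-root perturbation bound in trace norm** (from the proof of the
fidelity-certification theorem of "Quantum Tomography via Compressed Sensing").

For positive semidefinite `A, B` with `rank(A - B) ≤ r`:
`‖√A - √B‖_tr ≤ √(r ‖A - B‖_tr)`, and in particular
`|Tr √A - Tr √B| ≤ √(r ‖A - B‖_tr)`. -/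
theorem sqrt_perturbation_trace_norm_bound
    {ι : Type*} [Fintype ι] [DecidableEq ι] (r : ℕ)
    (A B : Matrix ι ι ℂ) (hA : A.PosSemidef) (hB : B.PosSemidef)
    (hrank : (A - B).rank ≤ r) :
    traceNorm (psdSqrt A - psdSqrt B) ≤ Real.sqrt ((r : ℝ) * traceNorm (A - B)) ∧
      |((psdSqrt A).trace).re - ((psdSqrt B).trace).re| ≤
        Real.sqrt ((r : ℝ) * traceNorm (A - B)) := by
  classical
  have hsA : psdSqrt A = hA.sqrt := dif_pos hA
  have hsB : psdSqrt B = hB.sqrt := dif_pos hB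
  have hC : (A - B).IsHermitian := hA.1.sub hB.1
  set lam := hC.eigenvalues with hlam
  set Cp := SqrtPerturb.mcfc hC (fun x => max x 0) with hCpdef
  set Cm := SqrtPerturb.mcfc hC (fun x => max (-x) 0) with hCmdef
  have hCp : Cp.PosSemidef := SqrtPerturb.mcfc_posSemidef hC fun i => le_max_right _ _
  have hCm : Cm.PosSemidef := SqrtPerturb.mcfc_posSemidef hC fun i => le_max_right _ _
  have hCsub : Cp - Cm = A - B := by
    have hid := SqrtPerturb.mcfc_id hC
    have h1 : Cp - Cm = SqrtPerturb.mcfc hC (fun x => x) := by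
      rw [hCpdef, hCmdef, SqrtPerturb.mcfc_sub]
      apply SqrtPerturb.mcfc_congr
      intro i
      rcases le_total (hC.eigenvalues i) 0 with h | h
      · simp [max_eq_right h, max_eq_left (neg_nonneg.mpr h)]
      · simp [max_eq_left h, max_eq_right (neg_nonpos.mpr h)]
    rw [h1, hid]
  have hBCp : (B + Cp).PosSemidef := hB.add hCp
  have hACm : (A + Cm).PosSemidef := hA.add hCm
  -- monotonicity facts
  have hM1 : (hBCp.sqrt - hB.sqrt).PosSemidef := by
    apply SqrtPerturb.sqrt_mono hB hBCp
    have e : B + Cp - B = Cp := by abel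
    rw [e]; exact hCp
  have hM2 : (hACm.sqrt - hA.sqrt).PosSemidef := by
    apply SqrtPerturb.sqrt_mono hA hACm
    have e : A + Cm - A = Cm := by abel
    rw [e]; exact hCm
  set D := hA.sqrt - hB.sqrt with hDdef
  have hΔeq : psdSqrt A - psdSqrt B = D := by rw [hsA, hsB]
  have hD : D.IsHermitian := (hA.posSemidef_sqrt.1).sub (hB.posSemidef_sqrt.1)
  set mu := hD.eigenvalues with hmu
  have hM1D : ((hBCp.sqrt - hB.sqrt) - D).PosSemidef := by
    have h1 : (B + Cp - A).PosSemidef := by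
      have e' : Cm = Cp - (A - B) := by rw [← hCsub]; abel
      have e : B + Cp - A = Cm := by rw [e']; abel
      rw [e]; exact hCm
    have h2 := SqrtPerturb.sqrt_mono hA hBCp h1
    have e : (hBCp.sqrt - hB.sqrt) - D = hBCp.sqrt - hA.sqrt := by rw [hDdef]; abel
    rw [e]; exact h2
  have hM2D : ((hACm.sqrt - hA.sqrt) - (-D)).PosSemidef := by
    have h1 : (A + Cm - B).PosSemidef := by
      have e' : Cp = Cm + (A - B) := by rw [← hCsub]; abel
      have e : A + Cm - B = Cp := by rw [e']; abel
      rw [e]; exact hCp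
    have h2 := SqrtPerturb.sqrt_mono hB hACm h1
    have e : (hACm.sqrt - hA.sqrt) - (-D) = hACm.sqrt - hB.sqrt := by rw [hDdef]; abel
    rw [e]; exact h2
  -- projections onto positive/negative eigenspaces of D
  set Pp := SqrtPerturb.mcfc hD (fun x => if 0 < x then 1 else 0) with hPpdef
  have hPp : Pp.PosSemidef :=
    SqrtPerturb.mcfc_posSemidef hD fun i => by split <;> norm_num
  have h1Pp : ((1 : Matrix ι ι ℂ) - Pp).PosSemidef := by
    rw [hPpdef, ← SqrtPerturb.mcfc_one hD, SqrtPerturb.mcfc_sub]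
    exact SqrtPerturb.mcfc_posSemidef hD fun i => by split <;> norm_num
  set Qq := SqrtPerturb.mcfc hD (fun x => if x < 0 then 1 else 0) with hQqdef
  have hQq : Qq.PosSemidef :=
    SqrtPerturb.mcfc_posSemidef hD fun i => by split <;> norm_num
  have h1Qq : ((1 : Matrix ι ι ℂ) - Qq).PosSemidef := by
    rw [hQqdef, ← SqrtPerturb.mcfc_one hD, SqrtPerturb.mcfc_sub]
    exact SqrtPerturb.mcfc_posSemidef hD fun i => by split <;> norm_num
  have hPD : Pp * D = SqrtPerturb.mcfc hD (fun x => max x 0) := by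
    have h1 : Pp * SqrtPerturb.mcfc hD (fun x => x)
        = SqrtPerturb.mcfc hD (fun x => max x 0) := by
      rw [hPpdef, SqrtPerturb.mcfc_mul]
      apply SqrtPerturb.mcfc_congr
      intro i
      by_cases h : 0 < hD.eigenvalues i
      · simp [h, max_eq_left h.le]
      · simp [h, max_eq_right (not_lt.mp h)]
    rwa [SqrtPerturb.mcfc_id hD] at h1
  have hQD : Qq * (-D) = SqrtPerturb.mcfc hD (fun x => max (-x) 0) := by
    have hneg : SqrtPerturb.mcfc hD (fun x => -x) = -D := by
      have h0 := SqrtPerturb.mcfc_neg hD (fun x => x)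
      rw [SqrtPerturb.mcfc_id hD] at h0
      exact h0.symm
    have h1 : Qq * SqrtPerturb.mcfc hD (fun x => -x)
        = SqrtPerturb.mcfc hD (fun x => max (-x) 0) := by
      rw [hQqdef, SqrtPerturb.mcfc_mul]
      apply SqrtPerturb.mcfc_congr
      intro i
      by_cases h : hD.eigenvalues i < 0
      · simp [h, max_eq_left (by linarith : (0:ℝ) ≤ -(hD.eigenvalues i))]
      · simp [h, max_eq_right (neg_nonpos.mpr (not_lt.mp h))]
    rwa [hneg] at h1
  -- trace bounds for positive and negative parts
  have hb1 : ((SqrtPerturb.mcfc hD (fun x => max x 0)).trace).re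
      ≤ ((hBCp.sqrt - hB.sqrt).trace).re := by
    rw [← hPD]
    exact SqrtPerturb.trace_mul_le_of_psd hPp h1Pp hM1 hM1D
  have hb2 : ((SqrtPerturb.mcfc hD (fun x => max (-x) 0)).trace).re
      ≤ ((hACm.sqrt - hA.sqrt).trace).re := by
    rw [← hQD]
    exact SqrtPerturb.trace_mul_le_of_psd hQq h1Qq hM2 hM2D
  -- trace subadditivity
  have hsub1 : ((hBCp.sqrt).trace).re ≤ ((hB.sqrt).trace).re + ((hCp.sqrt).trace).re :=
    SqrtPerturb.trace_sqrt_subadd hB hCp hBCp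
  have hsub2 : ((hACm.sqrt).trace).re ≤ ((hA.sqrt).trace).re + ((hCm.sqrt).trace).re :=
    SqrtPerturb.trace_sqrt_subadd hA hCm hACm
  -- traces of sqrt Cp, Cm
  have hCpsqrt : hCp.sqrt = SqrtPerturb.mcfc hC (fun x => Real.sqrt (max x 0)) :=
    SqrtPerturb.sqrt_eq_mcfc hC (fun i => le_max_right _ _) hCp hCpdef.symm
  have hCmsqrt : hCm.sqrt = SqrtPerturb.mcfc hC (fun x => Real.sqrt (max (-x) 0)) :=
    SqrtPerturb.sqrt_eq_mcfc hC (fun i => le_max_right _ _) hCm hCmdef.symm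
  have t3 : ((hCp.sqrt).trace).re = ∑ i, Real.sqrt (max (lam i) 0) := by
    rw [hCpsqrt, SqrtPerturb.mcfc_trace_re]
  have t4 : ((hCm.sqrt).trace).re = ∑ i, Real.sqrt (max (-(lam i)) 0) := by
    rw [hCmsqrt, SqrtPerturb.mcfc_trace_re]
  -- the trace norm of D
  have htn : traceNorm (psdSqrt A - psdSqrt B) = ∑ i, |mu i| := by
    rw [hΔeq]; exact traceNorm_herm hD
  have hsum_split : ∑ i, |mu i| = (∑ i, max (mu i) 0) + (∑ i, max (-(mu i)) 0) := by
    rw [← Finset.sum_add_distrib]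
    apply Finset.sum_congr rfl
    intro i _
    rcases le_total (mu i) 0 with h | h
    · rw [max_eq_right h, max_eq_left (neg_nonneg.mpr h), abs_of_nonpos h, zero_add]
    · rw [max_eq_left h, max_eq_right (neg_nonpos.mpr h), abs_of_nonneg h, add_zero]
  have t1 : (∑ i, max (mu i) 0) = ((SqrtPerturb.mcfc hD (fun x => max x 0)).trace).re :=
    (SqrtPerturb.mcfc_trace_re hD (fun x => max x 0)).symm
  have t2 : (∑ i, max (-(mu i)) 0)
      = ((SqrtPerturb.mcfc hD (fun x => max (-x) 0)).trace).re :=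
    (SqrtPerturb.mcfc_trace_re hD (fun x => max (-x) 0)).symm
  have t5 : (∑ i, Real.sqrt (max (lam i) 0)) + (∑ i, Real.sqrt (max (-(lam i)) 0))
      = ∑ i, Real.sqrt |lam i| := by
    rw [← Finset.sum_add_distrib]
    apply Finset.sum_congr rfl
    intro i _
    rcases le_total (lam i) 0 with h | h
    · rw [max_eq_right h, max_eq_left (neg_nonneg.mpr h), abs_of_nonpos h, Real.sqrt_zero,
        zero_add]
    · rw [max_eq_left h, max_eq_right (neg_nonpos.mpr h), abs_of_nonneg h, Real.sqrt_zero,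
        add_zero]
  -- main bound against ∑ √|λ|
  have hmain : traceNorm (psdSqrt A - psdSqrt B) ≤ ∑ i, Real.sqrt |lam i| := by
    rw [htn, hsum_split, t1, t2, ← t5]
    have e1 : ((hBCp.sqrt - hB.sqrt).trace).re
        = ((hBCp.sqrt).trace).re - ((hB.sqrt).trace).re := SqrtPerturb.trace_re_sub
    have e2 : ((hACm.sqrt - hA.sqrt).trace).re
        = ((hACm.sqrt).trace).re - ((hA.sqrt).trace).re := SqrtPerturb.trace_re_sub
    rw [e1] at hb1
    rw [e2] at hb2
    rw [← t3, ← t4]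
    linarith
  -- Cauchy-Schwarz with the rank bound
  have htnC : traceNorm (A - B) = ∑ i, |lam i| := traceNorm_herm hC
  have habs_nonneg : (0:ℝ) ≤ ∑ i, |lam i| := Finset.sum_nonneg fun i _ => abs_nonneg _
  have hCS : ∑ i, Real.sqrt |lam i| ≤ Real.sqrt ((r : ℝ) * traceNorm (A - B)) := by
    set s := Finset.univ.filter (fun i => lam i ≠ 0) with hsdef
    have hcard : (s.card : ℝ) ≤ (r : ℝ) := by
      have h1 : (A - B).rank = Fintype.card {i // lam i ≠ 0} :=
        hC.rank_eq_card_non_zero_eigs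
      have h2 : Fintype.card {i // lam i ≠ 0} = s.card := Fintype.card_subtype _
      have h3 : s.card ≤ r := by rw [← h2, ← h1]; exact hrank
      exact_mod_cast h3
    have hzero : ∀ i ∈ Finset.univ, i ∉ s → Real.sqrt |lam i| = 0 := by
      intro i _ hi
      rw [hsdef] at hi
      simp only [Finset.mem_filter, Finset.mem_univ, true_and, not_not] at hi
      simp [hi]
    have hsum_eq : ∑ i, Real.sqrt |lam i| = ∑ i ∈ s, Real.sqrt |lam i| :=
      (Finset.sum_subset (Finset.subset_univ s) hzero).symm
    have hCS2 := Real.sum_sqrt_mul_sqrt_le s (f := fun _ => (1:ℝ))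
      (g := fun i => |lam i|) (fun i => zero_le_one) (fun i => abs_nonneg _)
    simp only [Real.sqrt_one, one_mul] at hCS2
    have hs1 : (∑ _i ∈ s, (1:ℝ)) = (s.card : ℝ) := by simp
    have hmono1 : Real.sqrt (∑ _i ∈ s, (1:ℝ)) ≤ Real.sqrt (r:ℝ) := by
      apply Real.sqrt_le_sqrt; rw [hs1]; exact hcard
    have hmono2 : Real.sqrt (∑ i ∈ s, |lam i|) ≤ Real.sqrt (∑ i, |lam i|) := by
      apply Real.sqrt_le_sqrt
      exact Finset.sum_le_sum_of_subset_of_nonneg (Finset.subset_univ s)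
        (fun i _ _ => abs_nonneg _)
    have hfin : ∑ i, Real.sqrt |lam i| ≤ Real.sqrt (r:ℝ) * Real.sqrt (∑ i, |lam i|) := by
      rw [hsum_eq]
      calc ∑ i ∈ s, Real.sqrt |lam i| ≤ _ := hCS2
        _ ≤ Real.sqrt (r:ℝ) * Real.sqrt (∑ i, |lam i|) :=
          mul_le_mul hmono1 hmono2 (Real.sqrt_nonneg _) (Real.sqrt_nonneg _)
    rw [htnC, Real.sqrt_mul (by positivity : (0:ℝ) ≤ (r:ℝ))]
    exact hfin
  refine ⟨hmain.trans hCS, ?_⟩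
  have h2 : |((psdSqrt A).trace).re - ((psdSqrt B).trace).re|
      ≤ traceNorm (psdSqrt A - psdSqrt B) := by
    have e : ((psdSqrt A).trace).re - ((psdSqrt B).trace).re
        = ((psdSqrt A - psdSqrt B).trace).re := SqrtPerturb.trace_re_sub.symm
    rw [e, htn, hΔeq, SqrtPerturb.trace_re_eq_sum_eigenvalues hD]
    exact Finset.abs_sum_le_sum_abs _ _
  exact h2.trans (hmain.trans hCS)
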